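/- (Miller's rank-one inverse update) Let $G$ be an invertible $n imes n$ real matrix, and let $E$ be a rank-one matrix such that $G + E$ is invertible. Then $1 + \operatorname{tr}(G^{-1} E) \ne 0$ and $(G + E)^{-1} = G^{-1} - \frac{1}{1 + \operatorname{tr}(G^{-1} E)} G^{-1} E G^{-1}$. -/

import Mathlib

open Matrix

lemma rank_one_decomp {n : ℕ} (H : Matrix (Fin n) (Fin n) ℝ) (h : H.rank = 1) :
    ∃ w c : Fin n → ℝ, H = vecMulVec w c := by
  have h1 : Module.finrank ℝ (LinearMap.range H.mulVecLin) = 1 := h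
  rw [finrank_eq_one_iff'] at h1
  obtain ⟨⟨w, hw⟩, hw0, hspan⟩ := h1
  have hcol : ∀ j : Fin n, ∃ cj : ℝ, ∀ i, cj * w i = H i j := by
    intro j
    have hmem : (fun i => H i j) ∈ LinearMap.range H.mulVecLin := by
      refine ⟨Pi.single j 1, ?_⟩
      simp [mulVecLin_apply, mulVec_single]
      rfl
    obtain ⟨cj, hcj⟩ := hspan ⟨_, hmem⟩
    exact ⟨cj, fun i => congrFun (congrArg Subtype.val hcj) i⟩
  choose c hc using hcol
  refine ⟨w, c, ?_⟩
  ext i j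
  rw [vecMulVec_apply, ← hc j i, mul_comm]

/-- Miller's rank-one inverse update theorem. -/
theorem miller_rank_one_update {n : ℕ} (G E : Matrix (Fin n) (Fin n) ℝ)
    (hG : IsUnit G.det) (hE : E.rank = 1) (hGE : IsUnit (G + E).det) :
    1 + (G⁻¹ * E).trace ≠ 0 ∧
      (G + E)⁻¹ = G⁻¹ - (1 + (G⁻¹ * E).trace)⁻¹ • (G⁻¹ * E * G⁻¹) := by
  set H := G⁻¹ * E with hH
  have hGinv : IsUnit (G⁻¹).det := isUnit_nonsing_inv_det G hG
  have hrankH : H.rank = 1 := by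
    rw [hH, rank_mul_eq_right_of_isUnit_det _ _ hGinv, hE]
  obtain ⟨w, c, hwc⟩ := rank_one_decomp H hrankH
  set t := H.trace with ht
  have htval : t = c ⬝ᵥ w := by
    rw [ht, hwc, trace]
    simp [vecMulVec_apply, diag, dotProduct, mul_comm]
  -- key: H * H = t • H
  have hkey : H * H = t • H := by
    ext i j
    rw [hwc, htval]
    simp only [mul_apply, vecMulVec_apply, Matrix.smul_apply, smul_eq_mul, dotProduct,
      Finset.sum_mul]
    exact Finset.sum_congr rfl fun k _ => by ring
  -- G + E = G * (1 + H)
  have hGE' : G + E = G * (1 + H) := by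
    rw [mul_add, mul_one, hH, ← mul_assoc, mul_nonsing_inv _ hG, one_mul]
  have hunit1H : IsUnit (1 + H).det := by
    have h2 := hGE
    rw [hGE', det_mul] at h2
    exact isUnit_of_mul_isUnit_right h2
  have hne : 1 + t ≠ 0 := by
    intro h0
    have htm1 : t = -1 := by linarith
    have hz : (1 + H) * H = 0 := by
      rw [add_mul, one_mul, hkey, htm1]
      simp
    have hH0 : H = 0 := by
      have h3 := congrArg (fun M => (1 + H)⁻¹ * M) hz
      simpa [← mul_assoc, nonsing_inv_mul _ hunit1H] using h3
    rw [hH0] at hrankH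
    simp at hrankH
  refine ⟨hne, ?_⟩
  have h1H : (1 + H) * (1 - (1 + t)⁻¹ • H) = 1 := by
    rw [mul_sub, mul_one, mul_smul_comm, add_mul, one_mul, hkey, smul_add, smul_smul]
    match_scalars <;> field_simp <;> ring
  have hR : G⁻¹ - (1 + t)⁻¹ • (H * G⁻¹) = (1 - (1 + t)⁻¹ • H) * G⁻¹ := by
    rw [sub_mul, one_mul, Matrix.smul_mul]
  have hcalc : (G + E) * (G⁻¹ - (1 + t)⁻¹ • (H * G⁻¹)) = 1 := by
    rw [hR, hGE', mul_assoc, ← mul_assoc (1 + H), h1H, one_mul, mul_nonsing_inv _ hG]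
  have hfin := inv_eq_right_inv hcalc
  rw [hfin, hH, mul_assoc]
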